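/- Let N ≥ 4 be an integer and c₁ > 0. Define the N×N real symmetric matrix D(t,c₁) by: D₁₁ = 2c₁; D_{1,N} = D_{N,1} = t − c₁; D_{1,j} = 0 for 2 ≤ j ≤ N−1; diagonal entries D_{k,k} = α_k where α₂ = 6c₁ − 5t, α_k = 2(2k² − 3k + 1)c₁ − (4k − 1)t for 3 ≤ k ≤ N−1, and α_N = (2N² − 4N + 4)c₁ − (3N − 5 + N²/(N−1)²)t; tridiagonal entries D_{k,k+1} = D_{k+1,k} = β_k = 2kt − (2k² − k − 1)c₁ for 2 ≤ k ≤ N−1; last-column entries D_{2,N} = D_{N,2} = −t and D_{k,N} = D_{N,k} = t for 3 ≤ k ≤ N−2; all other entries zero. Then for every t ∈ [0, c₁], the matrix D(t,c₁) is positive semidefinite. -/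

import Mathlib

open Matrix

/-- Diagonal entries α_k (1-based index `k`) of the N×N matrix D(t,c₁). -/
noncomputable def Dalpha (N : ℕ) (t c : ℝ) (k : ℕ) : ℝ :=
  if k = 2 then 6 * c - 5 * t
  else if k ≤ N - 1 then 2 * (2 * (k : ℝ) ^ 2 - 3 * (k : ℝ) + 1) * c - (4 * (k : ℝ) - 1) * t
  else (2 * (N : ℝ) ^ 2 - 4 * (N : ℝ) + 4) * c
    - (3 * (N : ℝ) - 5 + (N : ℝ) ^ 2 / ((N : ℝ) - 1) ^ 2) * t

/-- Off-diagonal entries β_k (1-based index `k`) of the N×N matrix D(t,c₁). -/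
noncomputable def Dbeta (t c : ℝ) (k : ℕ) : ℝ :=
  2 * (k : ℝ) * t - (2 * (k : ℝ) ^ 2 - (k : ℝ) - 1) * c

/-- Upper-triangular entry of D(t,c₁) at 1-based position (a,b) with a ≤ b. -/
noncomputable def Dentry (N : ℕ) (t c : ℝ) (a b : ℕ) : ℝ :=
  if a = 1 then (if b = 1 then 2 * c else if b = N then t - c else 0)
  else if a = b then Dalpha N t c a
  else if b = a + 1 then Dbeta t c a
  else if b = N then (if a = 2 then -t else if a ≤ N - 2 then t else 0)
  else 0

/-- The N×N symmetric matrix D(t,c₁) appearing in the primal-feasibility bound. -/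
noncomputable def Dmat (N : ℕ) (t c : ℝ) : Matrix (Fin N) (Fin N) ℝ :=
  fun i j =>
    if (i : ℕ) ≤ (j : ℕ) then Dentry N t c ((i : ℕ) + 1) ((j : ℕ) + 1)
    else Dentry N t c ((j : ℕ) + 1) ((i : ℕ) + 1)

open Finset

lemma dentry_lin (N : ℕ) (t c : ℝ) (a b : ℕ) :
    Dentry N t c a b = (c - t) * Dentry N 0 1 a b + t * Dentry N 1 1 a b := by
  unfold Dentry Dalpha Dbeta
  split_ifs <;> ring

noncomputable def E0 (N : ℕ) (t c : ℝ) (i j : ℕ) : ℝ :=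
  if i ≤ j then Dentry N t c (i+1) (j+1) else Dentry N t c (j+1) (i+1)

noncomputable def DA (N : ℕ) (t c : ℝ) (i : ℕ) : ℝ :=
  if i = 0 then 2*c else Dalpha N t c (i+1)
noncomputable def DB (t c : ℝ) (i : ℕ) : ℝ :=
  if i = 0 then 0 else Dbeta t c (i+1)
noncomputable def DC (t : ℝ) (i : ℕ) : ℝ := if i = 1 then -t else t

noncomputable def RHS (N : ℕ) (t c : ℝ) (i j : ℕ) : ℝ :=
      (if i = j then DA N t c i else 0)
      + ((if j = i+1 then DB t c i else 0) + (if i = j+1 then DB t c j else 0))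
      + ((if i = 0 ∧ j = N-1 then t-c else 0) + (if j = 0 ∧ i = N-1 then t-c else 0))
      + ((if 1 ≤ i ∧ i ≤ N-3 ∧ j = N-1 then DC t i else 0)
         + (if 1 ≤ j ∧ j ≤ N-3 ∧ i = N-1 then DC t j else 0))

lemma RHS_symm (N : ℕ) (t c : ℝ) (i j : ℕ) : RHS N t c i j = RHS N t c j i := by
  unfold RHS
  by_cases h : i = j
  · subst h; ring
  · rw [if_neg h, if_neg (show ¬ j = i from fun hh => h hh.symm)]; ring

lemma E0_symm (N : ℕ) (t c : ℝ) (i j : ℕ) : E0 N t c i j = E0 N t c j i := by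
  unfold E0
  rcases lt_trichotomy i j with h | h | h
  · rw [if_pos (le_of_lt h), if_neg (by omega : ¬ j ≤ i)]
  · subst h; rfl
  · rw [if_pos (le_of_lt h), if_neg (by omega : ¬ i ≤ j)]

lemma Edec_le {N : ℕ} (hN : 4 ≤ N) (t c : ℝ) {i j : ℕ} (hij : i ≤ j) (hj : j < N) :
    E0 N t c i j = RHS N t c i j := by
  unfold E0 RHS DA DB DC
  rw [if_pos hij]
  rcases eq_or_lt_of_le hij with h | hlt
  · -- i = j
    subst h
    rw [if_pos rfl, if_neg (show ¬ i = i+1 by omega),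
      if_neg (show ¬ (i = 0 ∧ i = N-1) by omega),
      if_neg (show ¬ (1 ≤ i ∧ i ≤ N-3 ∧ i = N-1) by omega)]
    unfold Dentry
    by_cases h0 : i = 0
    · subst h0; norm_num
    · rw [if_neg (show ¬ i+1 = 1 by omega), if_pos rfl, if_neg h0]; ring
  · -- i < j
    rw [if_neg (show ¬ i = j by omega), if_neg (show ¬ i = j + 1 by omega),
      if_neg (show ¬ (j = 0 ∧ i = N-1) by omega),
      if_neg (show ¬ (1 ≤ j ∧ j ≤ N-3 ∧ i = N-1) by omega)]
    unfold Dentry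
    by_cases h0 : i = 0
    · subst h0
      rw [if_pos rfl, if_neg (show ¬ j + 1 = 1 by omega),
        if_neg (show ¬ (1 ≤ 0 ∧ 0 ≤ N-3 ∧ j = N-1) by omega)]
      by_cases hjN : j = N-1
      · rw [if_pos (show j + 1 = N by omega), if_pos (show (0:ℕ) = 0 ∧ j = N-1 by omega),
          if_neg (show ¬ j = 0 + 1 by omega)]
        ring
      · rw [if_neg (show ¬ j + 1 = N by omega), if_neg (show ¬ ((0:ℕ) = 0 ∧ j = N-1) by omega)]
        by_cases hj1 : j = 0 + 1
        · rw [if_pos hj1]; subst hj1; unfold Dbeta; norm_num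
        · rw [if_neg hj1]; ring
    · -- 1 ≤ i < j
      rw [if_neg (show ¬ i + 1 = 1 by omega), if_neg (show ¬ i + 1 = j + 1 by omega),
        if_neg (show ¬ (i = 0 ∧ j = N-1) by omega)]
      by_cases hj1 : j = i + 1
      · rw [if_pos (show j + 1 = i + 1 + 1 by omega), if_pos hj1,
          if_neg (show ¬ (1 ≤ i ∧ i ≤ N-3 ∧ j = N-1) by omega), if_neg (show ¬ i = 0 by omega)]
        ring
      · rw [if_neg (show ¬ j + 1 = i + 1 + 1 by omega), if_neg hj1]
        by_cases hjN : j = N - 1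
        · rw [if_pos (show j + 1 = N by omega),
            if_pos (show 1 ≤ i ∧ i ≤ N-3 ∧ j = N-1 by omega)]
          by_cases hi1 : i = 1
          · rw [if_pos (show i + 1 = 2 by omega), if_pos hi1]; ring
          · rw [if_neg (show ¬ i + 1 = 2 by omega), if_pos (show i + 1 ≤ N - 2 by omega),
              if_neg hi1]
            ring
        · rw [if_neg (show ¬ j + 1 = N by omega),
            if_neg (show ¬ (1 ≤ i ∧ i ≤ N-3 ∧ j = N-1) by omega)]
          ring

lemma Edec {N : ℕ} (hN : 4 ≤ N) (t c : ℝ) {i j : ℕ} (hi : i < N) (hj : j < N) :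
    E0 N t c i j = RHS N t c i j := by
  rcases le_total i j with h | h
  · exact Edec_le hN t c h hj
  · rw [E0_symm, Edec_le hN t c h hi, RHS_symm]

lemma sum_shrink (n : ℕ) (g : ℕ → ℝ) :
    ∑ i ∈ range n, (if i + 1 < n then g i else 0) = ∑ i ∈ range (n-1), g i := by
  cases n with
  | zero => simp
  | succ m =>
    rw [Finset.sum_range_succ]
    simp only [Nat.add_lt_add_iff_right, Nat.succ_sub_one]
    rw [if_neg (lt_irrefl m), add_zero]
    exact Finset.sum_congr rfl fun i hi => if_pos (mem_range.mp hi)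

lemma qf_struct {N : ℕ} (hN : 4 ≤ N) (t c : ℝ) (y : ℕ → ℝ) :
    ∑ i ∈ range N, ∑ j ∈ range N, y i * E0 N t c i j * y j
    = (∑ i ∈ range N, DA N t c i * y i ^ 2)
      + 2 * (∑ i ∈ range (N-1), DB t c i * (y i * y (i+1)))
      + 2 * (t - c) * (y 0 * y (N-1))
      + 2 * (∑ i ∈ Icc 1 (N-3), DC t i * (y i * y (N-1))) := by
  have hN1 : N - 1 ∈ range N := by simp; omega
  have h0 : 0 ∈ range N := by simp; omega
  have hrw : ∑ i ∈ range N, ∑ j ∈ range N, y i * E0 N t c i j * y j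
      = ∑ i ∈ range N, ∑ j ∈ range N, y i * RHS N t c i j * y j := by
    refine Finset.sum_congr rfl fun i hi => Finset.sum_congr rfl fun j hj => ?_
    rw [Edec hN t c (mem_range.mp hi) (mem_range.mp hj)]
  rw [hrw]
  unfold RHS
  have expand : ∀ i j : ℕ, y i * ((if i = j then DA N t c i else 0)
      + ((if j = i+1 then DB t c i else 0) + (if i = j+1 then DB t c j else 0))
      + ((if i = 0 ∧ j = N-1 then t-c else 0) + (if j = 0 ∧ i = N-1 then t-c else 0))
      + ((if 1 ≤ i ∧ i ≤ N-3 ∧ j = N-1 then DC t i else 0)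
         + (if 1 ≤ j ∧ j ≤ N-3 ∧ i = N-1 then DC t j else 0))) * y j
      = (if i = j then DA N t c i * (y i * y j) else 0)
      + ((if j = i+1 then DB t c i * (y i * y j) else 0)
          + (if i = j+1 then DB t c j * (y i * y j) else 0))
      + ((if i = 0 ∧ j = N-1 then (t-c) * (y i * y j) else 0)
          + (if j = 0 ∧ i = N-1 then (t-c) * (y i * y j) else 0))
      + ((if 1 ≤ i ∧ i ≤ N-3 ∧ j = N-1 then DC t i * (y i * y j) else 0)
          + (if 1 ≤ j ∧ j ≤ N-3 ∧ i = N-1 then DC t j * (y i * y j) else 0)) := by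
    intro i j; split_ifs <;> ring
  simp only [expand, Finset.sum_add_distrib]
  -- piece 1
  have P1 : ∑ i ∈ range N, ∑ j ∈ range N, (if i = j then DA N t c i * (y i * y j) else 0)
      = ∑ i ∈ range N, DA N t c i * y i ^ 2 := by
    refine Finset.sum_congr rfl fun i hi => ?_
    rw [Finset.sum_ite_eq (range N) i (fun j => DA N t c i * (y i * y j)), if_pos hi]
    ring
  -- piece 2
  have P2 : ∑ i ∈ range N, ∑ j ∈ range N, (if j = i+1 then DB t c i * (y i * y j) else 0)
      = ∑ i ∈ range (N-1), DB t c i * (y i * y (i+1)) := by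
    rw [← sum_shrink N (fun i => DB t c i * (y i * y (i+1)))]
    refine Finset.sum_congr rfl fun i hi => ?_
    rw [Finset.sum_ite_eq' (range N) (i+1) (fun j => DB t c i * (y i * y j))]
    simp [mem_range]
  -- piece 3
  have P3 : ∑ i ∈ range N, ∑ j ∈ range N, (if i = j+1 then DB t c j * (y i * y j) else 0)
      = ∑ i ∈ range (N-1), DB t c i * (y i * y (i+1)) := by
    rw [Finset.sum_comm, ← sum_shrink N (fun j => DB t c j * (y j * y (j+1)))]
    refine Finset.sum_congr rfl fun j hj => ?_
    rw [Finset.sum_ite_eq' (range N) (j+1) (fun i => DB t c j * (y i * y j))]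
    simp only [mem_range]
    split_ifs <;> ring
  -- piece 4
  have P4 : ∑ i ∈ range N, ∑ j ∈ range N, (if i = 0 ∧ j = N-1 then (t-c) * (y i * y j) else 0)
      = (t-c) * (y 0 * y (N-1)) := by
    rw [Finset.sum_eq_single_of_mem 0 h0 (fun b _ hb => Finset.sum_eq_zero
      (fun j _ => if_neg (fun hc => hb hc.1)))]
    simp only [true_and]
    rw [Finset.sum_ite_eq' (range N) (N-1) (fun j => (t-c) * (y 0 * y j)), if_pos hN1]
  -- piece 5
  have P5 : ∑ i ∈ range N, ∑ j ∈ range N, (if j = 0 ∧ i = N-1 then (t-c) * (y i * y j) else 0)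
      = (t-c) * (y 0 * y (N-1)) := by
    rw [Finset.sum_eq_single_of_mem (N-1) hN1 (fun b _ hb => Finset.sum_eq_zero
      (fun j _ => if_neg (fun hc => hb hc.2)))]
    simp only [and_true]
    rw [Finset.sum_ite_eq' (range N) 0 (fun j => (t-c) * (y (N-1) * y j)), if_pos h0]
    ring
  -- piece 6
  have P6 : ∑ i ∈ range N, ∑ j ∈ range N,
        (if 1 ≤ i ∧ i ≤ N-3 ∧ j = N-1 then DC t i * (y i * y j) else 0)
      = ∑ i ∈ Icc 1 (N-3), DC t i * (y i * y (N-1)) := by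
    have hfil : Icc 1 (N-3) = (range N).filter (fun i => 1 ≤ i ∧ i ≤ N-3) := by
      ext a; simp [mem_range, mem_Icc, mem_filter]; omega
    rw [hfil, Finset.sum_filter]
    refine Finset.sum_congr rfl fun i hi => ?_
    have : ∀ j : ℕ, (if 1 ≤ i ∧ i ≤ N-3 ∧ j = N-1 then DC t i * (y i * y j) else 0)
        = (if j = N-1 then (if 1 ≤ i ∧ i ≤ N-3 then DC t i * (y i * y j) else 0) else 0) := by
      intro j; split_ifs <;> first | rfl | omega
    simp only [this]
    rw [Finset.sum_ite_eq' (range N) (N-1)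
      (fun j => if 1 ≤ i ∧ i ≤ N-3 then DC t i * (y i * y j) else 0), if_pos hN1]
  -- piece 7
  have P7 : ∑ i ∈ range N, ∑ j ∈ range N,
        (if 1 ≤ j ∧ j ≤ N-3 ∧ i = N-1 then DC t j * (y i * y j) else 0)
      = ∑ i ∈ Icc 1 (N-3), DC t i * (y i * y (N-1)) := by
    rw [Finset.sum_comm]
    have hfil : Icc 1 (N-3) = (range N).filter (fun i => 1 ≤ i ∧ i ≤ N-3) := by
      ext a; simp [mem_range, mem_Icc, mem_filter]; omega
    rw [hfil, Finset.sum_filter]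
    refine Finset.sum_congr rfl fun j hj => ?_
    have : ∀ i : ℕ, (if 1 ≤ j ∧ j ≤ N-3 ∧ i = N-1 then DC t j * (y i * y j) else 0)
        = (if i = N-1 then (if 1 ≤ j ∧ j ≤ N-3 then DC t j * (y j * y (N-1)) else 0) else 0) := by
      intro i; split_ifs with h1 h2 h3 <;> first | omega | (try rw [h1.2.2]) <;> (try rw [h2]) <;> ring
    simp only [this]
    rw [Finset.sum_ite_eq' (range N) (N-1)
      (fun i => if 1 ≤ j ∧ j ≤ N-3 then DC t j * (y j * y (N-1)) else 0), if_pos hN1]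
  rw [P1, P2, P3, P4, P5, P6, P7]
  ring

lemma quad_link (N : ℕ) (t c : ℝ) (x : Fin N → ℝ) :
    star x ⬝ᵥ (Dmat N t c) *ᵥ x
    = ∑ i ∈ range N, ∑ j ∈ range N,
        (fun k => if h : k < N then x ⟨k, h⟩ else 0) i * E0 N t c i j
        * (fun k => if h : k < N then x ⟨k, h⟩ else 0) j := by
  set y : ℕ → ℝ := fun k => if h : k < N then x ⟨k, h⟩ else 0 with hy
  have hyx : ∀ i : Fin N, y (i : ℕ) = x i := by
    intro i; simp only [hy]; rw [dif_pos i.isLt]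
  simp only [dotProduct, mulVec, Pi.star_apply, star_trivial]
  have step : ∀ i : Fin N, x i * ∑ j : Fin N, Dmat N t c i j * x j
      = ∑ j ∈ range N, y (i:ℕ) * E0 N t c (i:ℕ) j * y j := by
    intro i
    rw [Finset.mul_sum]
    rw [← Fin.sum_univ_eq_sum_range (fun j => y (i:ℕ) * E0 N t c (i:ℕ) j * y j) N]
    refine Finset.sum_congr rfl fun j _ => ?_
    rw [hyx i, hyx j]
    have : Dmat N t c i j = E0 N t c (i:ℕ) (j:ℕ) := rfl
    rw [this]; ring
  calc ∑ i : Fin N, x i * ∑ j : Fin N, Dmat N t c i j * x j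
      = ∑ i : Fin N, ∑ j ∈ range N, y (i:ℕ) * E0 N t c (i:ℕ) j * y j := by
        exact Finset.sum_congr rfl fun i _ => step i
    _ = ∑ i ∈ range N, ∑ j ∈ range N, y i * E0 N t c i j * y j :=
        Fin.sum_univ_eq_sum_range (fun i => ∑ j ∈ range N, y i * E0 N t c i j * y j) N

lemma sos01 {N : ℕ} (hN : 4 ≤ N) (y : ℕ → ℝ) :
    (∑ i ∈ range N, DA N 0 1 i * y i ^ 2)
      + 2 * (∑ i ∈ range (N-1), DB 0 1 i * (y i * y (i+1)))
      + 2 * ((0:ℝ) - 1) * (y 0 * y (N-1))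
      + 2 * (∑ i ∈ Icc 1 (N-3), DC 0 i * (y i * y (N-1)))
    = y 0^2 + (y 0 - y (N-1))^2
      + (∑ j ∈ range (N-2), ((2*((j:ℝ)+1)^2 + 3*((j:ℝ)+1)) * (y (j+1) - y (j+2))^2
          + y (j+1)^2))
      + ((N:ℝ)+1) * y (N-1)^2 := by
  obtain ⟨m, rfl⟩ : ∃ m, N = m + 2 := ⟨N - 2, by omega⟩
  have hm : 2 ≤ m := by omega
  have hNm : m + 2 - 1 = m + 1 := by omega
  have hNm2 : m + 2 - 2 = m := by omega
  have hC : ∀ i : ℕ, DC 0 i = 0 := by intro i; unfold DC; split_ifs <;> norm_num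
  simp only [hC, zero_mul, Finset.sum_const_zero, mul_zero, hNm, hNm2]
  rw [Finset.sum_range_succ (fun i => DA (m+2) 0 1 i * y i ^ 2) (m+1)]
  rw [Finset.sum_range_succ' (fun i => DA (m+2) 0 1 i * y i ^ 2) m]
  rw [Finset.sum_range_succ' (fun i => DB 0 1 i * (y i * y (i+1))) m]
  have hDB0 : DB 0 1 0 * (y 0 * y 1) = 0 := by unfold DB; simp
  have hDA0 : DA (m+2) 0 1 0 = 2 := by unfold DA; norm_num
  have hDAN : DA (m+2) 0 1 (m+1) = 2*((m:ℝ)+2)^2 - 4*((m:ℝ)+2) + 4 := by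
    unfold DA Dalpha
    rw [if_neg (by omega : ¬ m+1 = 0), if_neg (by omega : ¬ m+1+1 = 2),
      if_neg (by omega : ¬ m+1+1 ≤ m+2-1)]
    push_cast; ring
  set G : ℕ → ℝ := fun j => (2*(j:ℝ)^2 + 3*(j:ℝ)) * y (j+1)^2 with hG
  have tele := Finset.sum_range_sub' G m
  have key : ∑ j ∈ range m, (DA (m+2) 0 1 (j+1) * y (j+1) ^ 2
        + 2 * (DB 0 1 (j+1) * (y (j+1) * y (j+1+1))))
      = ∑ j ∈ range m, (((2*((j:ℝ)+1)^2 + 3*((j:ℝ)+1)) * (y (j+1) - y (j+2))^2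
          + y (j+1)^2) + (G j - G (j+1))) := by
    refine Finset.sum_congr rfl fun j hj => ?_
    have hjm : j < m := mem_range.mp hj
    unfold DA DB Dalpha Dbeta
    rw [if_neg (by omega : ¬ j+1 = 0), if_neg (by omega : ¬ j+1 = 0)]
    simp only [hG]
    by_cases h0 : j = 0
    · subst h0
      rw [if_pos (by norm_num : 0+1+1 = 2)]
      push_cast; ring
    · rw [if_neg (by omega : ¬ j+1+1 = 2), if_pos (by omega : j+1+1 ≤ m+2-1)]
      push_cast; ring
  have split2 : ∑ j ∈ range m, (DA (m+2) 0 1 (j+1) * y (j+1) ^ 2)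
        + 2 * ∑ j ∈ range m, (DB 0 1 (j+1) * (y (j+1) * y (j+1+1)))
      = ∑ j ∈ range m, (((2*((j:ℝ)+1)^2 + 3*((j:ℝ)+1)) * (y (j+1) - y (j+2))^2
          + y (j+1)^2)) + (G 0 - G m) := by
    rw [← tele, ← Finset.sum_add_distrib, ← key, Finset.mul_sum, ← Finset.sum_add_distrib]
  have hcast : ((m:ℝ) + 2) = ((m+2 : ℕ) : ℝ) := by push_cast; ring
  rw [hDB0, hDA0, hDAN]
  have hG0 : G 0 = 0 := by simp [hG]
  have hGm : G m = (2*(m:ℝ)^2 + 3*(m:ℝ)) * y (m+1)^2 := rfl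
  push_cast
  nlinarith [split2, hG0, hGm]

noncomputable def pp (i : ℕ) : ℝ := 2*(i:ℝ)^2 + (i:ℝ) - 2
noncomputable def vv (N : ℕ) (i : ℕ) : ℝ := if i = N-2 then (N:ℝ)-5 else (i:ℝ)-2

lemma pp_pos {i : ℕ} (hi : 2 ≤ i) : 0 < pp i := by
  unfold pp
  have : (2:ℝ) ≤ (i:ℝ) := by exact_mod_cast hi
  nlinarith

lemma sos11 {N : ℕ} (hN : 4 ≤ N) (y : ℕ → ℝ) :
    (∑ i ∈ range N, DA N 1 1 i * y i ^ 2)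
      + 2 * (∑ i ∈ range (N-1), DB 1 1 i * (y i * y (i+1)))
      + 2 * ((1:ℝ) - 1) * (y 0 * y (N-1))
      + 2 * (∑ i ∈ Icc 1 (N-3), DC 1 i * (y i * y (N-1)))
    = 2 * y 0^2 + (y 1 - y 2 - y (N-1))^2
      + (∑ j ∈ range (N-3), (pp (j+2) * (y (j+2) - y (j+3))^2
          + 2 * vv N (j+2) * ((y (j+2) - y (j+3)) * y (N-1))
          + vv N (j+2)^2 / pp (j+2) * y (N-1)^2))
      + (Dalpha N 1 1 N - 1 - pp (N-2) + 2*((N:ℝ)-5)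
          - ∑ j ∈ range (N-3), vv N (j+2)^2 / pp (j+2)) * y (N-1)^2 := by
  obtain ⟨m, rfl⟩ : ∃ m, N = m + 4 := ⟨N - 4, by omega⟩
  have e1 : m + 4 - 1 = m + 3 := by omega
  have e2 : m + 4 - 2 = m + 2 := by omega
  have e3 : m + 4 - 3 = m + 1 := by omega
  simp only [e1, e2, e3]
  -- peel A-sum
  rw [Finset.sum_range_succ (fun i => DA (m+4) 1 1 i * y i ^ 2) (m+3)]
  rw [Finset.sum_range_succ' (fun i => DA (m+4) 1 1 i * y i ^ 2) (m+2)]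
  rw [Finset.sum_range_succ' (fun i => DA (m+4) 1 1 (i+1) * y (i+1) ^ 2) (m+1)]
  -- peel B-sum
  rw [Finset.sum_range_succ' (fun i => DB 1 1 i * (y i * y (i+1))) (m+2)]
  rw [Finset.sum_range_succ' (fun i => DB 1 1 (i+1) * (y (i+1) * y (i+1+1))) (m+1)]
  -- C-sum to range
  rw [← Finset.Ico_add_one_right_eq_Icc, Finset.sum_Ico_eq_sum_range]
  have e4 : m + 1 + 1 - 1 = m + 1 := by omega
  rw [e4]
  rw [Finset.sum_range_succ' (fun k => DC 1 (1+k) * (y (1+k) * y (m+3))) m]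
  -- extend C inner sum to range (m+1) with tilde coefficient
  have hCext : ∑ k ∈ range m, DC 1 (1+(k+1)) * (y (1+(k+1)) * y (m+3))
      = ∑ j ∈ range (m+1), (if j = m then 0 else 1) * (y (j+2) * y (m+3)) := by
    rw [Finset.sum_range_succ]
    rw [if_pos rfl, zero_mul, add_zero]
    refine Finset.sum_congr rfl fun k hk => ?_
    have hkm : k < m := mem_range.mp hk
    unfold DC
    rw [if_neg (by omega : ¬ 1+(k+1) = 1), if_neg (by omega : ¬ k = m)]
    norm_num
    left; congr 1; omega
  rw [hCext]
  -- telescoping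
  set W : ℕ → ℝ := fun i => pp i * y (i+1)^2 - 2 * vv (m+4) i * (y (i+1) * y (m+3)) with hW
  have tele := Finset.sum_range_sub' (fun j => W (j+1)) (m+1)
  -- per-term identity
  have key : ∑ j ∈ range (m+1),
        (DA (m+4) 1 1 (j+1+1) * y (j+1+1) ^ 2
          + 2 * (DB 1 1 (j+1+1) * (y (j+1+1) * y (j+1+1+1)))
          + 2 * ((if j = m then 0 else 1) * (y (j+2) * y (m+3)))
          + vv (m+4) (j+2)^2 / pp (j+2) * y (m+3)^2)
      = ∑ j ∈ range (m+1),
        ((pp (j+2) * (y (j+2) - y (j+3))^2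
          + 2 * vv (m+4) (j+2) * ((y (j+2) - y (j+3)) * y (m+3))
          + vv (m+4) (j+2)^2 / pp (j+2) * y (m+3)^2)
          + (W (j+1) - W (j+1+1))) := by
    refine Finset.sum_congr rfl fun j hj => ?_
    show DA (m+4) 1 1 (j+2) * y (j+2) ^ 2
          + 2 * (DB 1 1 (j+2) * (y (j+2) * y (j+3)))
          + 2 * ((if j = m then 0 else 1) * (y (j+2) * y (m+3)))
          + vv (m+4) (j+2)^2 / pp (j+2) * y (m+3)^2
        = (pp (j+2) * (y (j+2) - y (j+3))^2
          + 2 * vv (m+4) (j+2) * ((y (j+2) - y (j+3)) * y (m+3))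
          + vv (m+4) (j+2)^2 / pp (j+2) * y (m+3)^2)
          + (W (j+1) - W (j+2))
    have hjm : j < m + 1 := mem_range.mp hj
    have hp : (0:ℝ) < pp (j+2) := pp_pos (by omega)
    have hp' : pp (j+2) ≠ 0 := ne_of_gt hp
    unfold DA DB Dalpha Dbeta
    rw [if_neg (by omega : ¬ j+2 = 0), if_neg (by omega : ¬ j+2 = 0),
      if_neg (by omega : ¬ j+2+1 = 2), if_pos (by omega : j+2+1 ≤ m+4-1)]
    simp only [hW]
    unfold vv pp
    rw [if_neg (by omega : ¬ j+1 = m+4-2)]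
    by_cases hjm' : j = m
    · rw [if_pos (by omega : j+2 = m+4-2), if_pos hjm']
      have hj' : (j:ℝ) = (m:ℝ) := by exact_mod_cast hjm'
      field_simp
      push_cast [hj']
      ring
    · rw [if_neg (by omega : ¬ j+2 = m+4-2), if_neg hjm']
      field_simp
      push_cast
      ring
  have split2 : ∑ j ∈ range (m+1), (DA (m+4) 1 1 (j+1+1) * y (j+1+1) ^ 2)
        + 2 * ∑ j ∈ range (m+1), (DB 1 1 (j+1+1) * (y (j+1+1) * y (j+1+1+1)))
        + 2 * ∑ j ∈ range (m+1), ((if j = m then 0 else 1) * (y (j+2) * y (m+3)))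
        + ∑ j ∈ range (m+1), (vv (m+4) (j+2)^2 / pp (j+2)) * y (m+3)^2
      = ∑ j ∈ range (m+1),
        (pp (j+2) * (y (j+2) - y (j+3))^2
          + 2 * vv (m+4) (j+2) * ((y (j+2) - y (j+3)) * y (m+3))
          + vv (m+4) (j+2)^2 / pp (j+2) * y (m+3)^2)
        + (W (0+1) - W (m+1+1)) := by
    rw [← tele, ← Finset.sum_add_distrib, ← key, Finset.mul_sum, Finset.mul_sum,
      ← Finset.sum_add_distrib, ← Finset.sum_add_distrib, ← Finset.sum_add_distrib]
  -- boundary values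
  have hDA0 : DA (m+4) 1 1 0 = 2 := by unfold DA; norm_num
  have hDA1 : DA (m+4) 1 1 (0+1) = 1 := by
    unfold DA Dalpha
    rw [if_neg (by omega : ¬ (0:ℕ)+1 = 0), if_pos (by norm_num : (0:ℕ)+1+1 = 2)]
    norm_num
  have hDB1 : DB 1 1 (0+1) = -1 := by
    unfold DB Dbeta
    rw [if_neg (by omega : ¬ (0:ℕ)+1 = 0)]
    push_cast; ring
  have hDB0 : DB 1 1 0 * (y 0 * y (0+1)) = 0 := by unfold DB; simp
  have hDC1 : DC 1 (1+0) = -1 := by unfold DC; norm_num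
  have hW1 : W (0+1) = y 2^2 + 2 * (y 2 * y (m+3)) := by
    simp only [hW]; unfold pp vv
    rw [if_neg (by omega : ¬ (0:ℕ)+1 = m+4-2)]
    push_cast; ring
  have hWm2 : W (m+1+1) = (pp (m+2) - 2*((m:ℝ)+4-5)) * y (m+3)^2 := by
    simp only [hW]; unfold vv
    rw [if_pos (by omega : m+1+1 = m+4-2)]
    unfold pp
    push_cast; ring
  have hsum : ∑ j ∈ range (m+1), (vv (m+4) (j+2)^2 / pp (j+2)) * y (m+3)^2
      = (∑ j ∈ range (m+1), vv (m+4) (j+2)^2 / pp (j+2)) * y (m+3)^2 := by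
    rw [Finset.sum_mul]
  have hDAN : DA (m+4) 1 1 (m+3) = Dalpha (m+4) 1 1 (m+4) := by
    unfold DA
    rw [if_neg (by omega : ¬ m+3 = 0)]
  rw [hDA0, hDA1, hDB1, hDB0, hDC1, hDAN]
  have final := split2
  rw [hsum, hW1, hWm2] at final
  push_cast
  linear_combination final

lemma T_nonneg {N : ℕ} (j : ℕ) (b a : ℝ) :
    0 ≤ pp (j+2) * a^2 + 2 * vv N (j+2) * (a * b) + vv N (j+2)^2 / pp (j+2) * b^2 := by
  have hp : (0:ℝ) < pp (j+2) := pp_pos (by omega)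
  have hp' : pp (j+2) ≠ 0 := ne_of_gt hp
  have : pp (j+2) * a^2 + 2 * vv N (j+2) * (a * b) + vv N (j+2)^2 / pp (j+2) * b^2
      = (pp (j+2) * a + vv N (j+2) * b)^2 / pp (j+2) := by
    field_simp; ring
  rw [this]
  positivity

lemma R_nonneg {N : ℕ} (hN : 4 ≤ N) :
    0 ≤ Dalpha N 1 1 N - 1 - pp (N-2) + 2*((N:ℝ)-5)
        - ∑ j ∈ range (N-3), vv N (j+2)^2 / pp (j+2) := by
  have hα : Dalpha N 1 1 N = (2*(N:ℝ)^2-4*(N:ℝ)+4) - (3*(N:ℝ)-5+(N:ℝ)^2/((N:ℝ)-1)^2) := by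
    unfold Dalpha
    rw [if_neg (by omega : ¬ N = 2), if_neg (by omega : ¬ N ≤ N - 1)]
    ring
  have hcast2 : ((N-2:ℕ):ℝ) = (N:ℝ) - 2 := by
    rw [Nat.cast_sub (by omega)]; norm_num
  have hppN : pp (N-2) = 2*((N:ℝ)-2)^2 + ((N:ℝ)-2) - 2 := by
    unfold pp; rw [hcast2]
  rcases eq_or_lt_of_le hN with h4 | h5
  · -- N = 4
    subst h4
    norm_num [hα, hppN]
    norm_num [vv]
  · -- N ≥ 5
    have hN5 : (5:ℝ) ≤ (N:ℝ) := by exact_mod_cast h5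
    have hNe : ((N:ℝ)-1)^2 > 0 := by nlinarith
    have hd : (N:ℝ)^2/((N:ℝ)-1)^2 ≤ 25/16 := by
      rw [div_le_iff₀ hNe]; nlinarith
    have hS : ∑ j ∈ range (N-3), vv N (j+2)^2 / pp (j+2) ≤ ((N:ℝ)-4)/2 := by
      have hb : ∀ j ∈ range (N-3), vv N (j+2)^2 / pp (j+2)
          ≤ (if j = 0 then 0 else 1/2) := by
        intro j hj
        have hjr : j < N - 3 := mem_range.mp hj
        have hp : (0:ℝ) < pp (j+2) := pp_pos (by omega)
        rw [div_le_iff₀ hp]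
        unfold vv pp
        by_cases h0 : j = 0
        · subst h0
          rw [if_neg (by omega : ¬ (0:ℕ)+2 = N-2), if_pos rfl]
          norm_num
        · rw [if_neg h0]
          by_cases hlast : j + 2 = N - 2
          · rw [if_pos hlast]
            have hj' : (j:ℝ) = (N:ℝ) - 4 := by
              have : ((j:ℕ):ℝ) = ((N-4:ℕ):ℝ) := by exact_mod_cast congrArg Nat.cast (by omega : j = N-4)
              rw [this, Nat.cast_sub (by omega)]; norm_num
            push_cast
            rw [hj']
            nlinarith
          · rw [if_neg hlast]
            push_cast
            have hj1 : (1:ℝ) ≤ (j:ℝ) := by exact_mod_cast Nat.one_le_iff_ne_zero.mpr h0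
            nlinarith
      calc ∑ j ∈ range (N-3), vv N (j+2)^2 / pp (j+2)
          ≤ ∑ j ∈ range (N-3), (if j = 0 then (0:ℝ) else 1/2) := Finset.sum_le_sum hb
        _ = ((N:ℝ)-4)/2 := by
            obtain ⟨k, hk⟩ : ∃ k, N - 3 = k + 1 := ⟨N - 4, by omega⟩
            rw [hk, Finset.sum_range_succ' (fun j => if j = 0 then (0:ℝ) else 1/2) k]
            have : ∀ j : ℕ, (if j + 1 = 0 then (0:ℝ) else 1/2) = 1/2 := by
              intro j; rw [if_neg (by omega)]
            simp only [this, Finset.sum_const, Finset.card_range, nsmul_eq_mul]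
            have hkc : ((k:ℕ):ℝ) = (N:ℝ) - 4 := by
              have h' : ((k:ℕ):ℝ) = ((N-4:ℕ):ℝ) := by exact_mod_cast congrArg Nat.cast (by omega : k = N-4)
              rw [h', Nat.cast_sub (by omega)]; norm_num
            rw [hkc]; norm_num; ring
    rw [hα, hppN]
    linarith

lemma qf01_nonneg {N : ℕ} (hN : 4 ≤ N) (y : ℕ → ℝ) :
    0 ≤ ∑ i ∈ range N, ∑ j ∈ range N, y i * E0 N 0 1 i j * y j := by
  rw [qf_struct hN 0 1 y, sos01 hN y]
  have h1 : 0 ≤ ∑ j ∈ range (N-2), ((2*((j:ℝ)+1)^2 + 3*((j:ℝ)+1)) * (y (j+1) - y (j+2))^2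
      + y (j+1)^2) := by
    apply Finset.sum_nonneg
    intro j _
    positivity
  have h2 : 0 ≤ ((N:ℝ)+1) * y (N-1)^2 := by positivity
  nlinarith [sq_nonneg (y 0), sq_nonneg (y 0 - y (N-1))]

lemma qf11_nonneg {N : ℕ} (hN : 4 ≤ N) (y : ℕ → ℝ) :
    0 ≤ ∑ i ∈ range N, ∑ j ∈ range N, y i * E0 N 1 1 i j * y j := by
  rw [qf_struct hN 1 1 y, sos11 hN y]
  have h1 : 0 ≤ ∑ j ∈ range (N-3), (pp (j+2) * (y (j+2) - y (j+3))^2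
      + 2 * vv N (j+2) * ((y (j+2) - y (j+3)) * y (N-1))
      + vv N (j+2)^2 / pp (j+2) * y (N-1)^2) := by
    apply Finset.sum_nonneg
    intro j _
    exact T_nonneg j (y (N-1)) (y (j+2) - y (j+3))
  have h2 : 0 ≤ (Dalpha N 1 1 N - 1 - pp (N-2) + 2*((N:ℝ)-5)
      - ∑ j ∈ range (N-3), vv N (j+2)^2 / pp (j+2)) * y (N-1)^2 :=
    mul_nonneg (R_nonneg hN) (sq_nonneg _)
  nlinarith [sq_nonneg (y 0), sq_nonneg (y 1 - y 2 - y (N-1))]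

theorem stmt19 (N : ℕ) (hN : 4 ≤ N) (c₁ t : ℝ) (hc₁ : 0 < c₁)
    (ht : t ∈ Set.Icc (0 : ℝ) c₁) :
    (Dmat N t c₁).PosSemidef := by
  obtain ⟨ht0, ht1⟩ := ht
  rw [posSemidef_iff_dotProduct_mulVec]
  constructor
  · -- Hermitian
    ext i j
    rw [conjTranspose_apply]
    show star (Dmat N t c₁ j i) = Dmat N t c₁ i j
    rw [star_trivial]
    unfold Dmat
    by_cases h1 : (j:ℕ) ≤ (i:ℕ) <;> by_cases h2 : (i:ℕ) ≤ (j:ℕ)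
    · rw [if_pos h1, if_pos h2, le_antisymm h1 h2]
    · rw [if_pos h1, if_neg h2]
    · rw [if_neg h1, if_pos h2]
    · omega
  · intro x
    rw [quad_link N t c₁ x]
    set y : ℕ → ℝ := fun k => if h : k < N then x ⟨k, h⟩ else 0 with hy
    have Elin : ∀ i j : ℕ, E0 N t c₁ i j = (c₁ - t) * E0 N 0 1 i j + t * E0 N 1 1 i j := by
      intro i j; unfold E0; split_ifs with h
      · exact dentry_lin N t c₁ (i+1) (j+1)
      · exact dentry_lin N t c₁ (j+1) (i+1)
    have hterm : ∀ i j : ℕ, y i * E0 N t c₁ i j * y j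
        = (c₁ - t) * (y i * E0 N 0 1 i j * y j) + t * (y i * E0 N 1 1 i j * y j) := by
      intro i j; rw [Elin i j]; ring
    have hsplit : ∑ i ∈ range N, ∑ j ∈ range N, y i * E0 N t c₁ i j * y j
        = (c₁ - t) * (∑ i ∈ range N, ∑ j ∈ range N, y i * E0 N 0 1 i j * y j)
          + t * (∑ i ∈ range N, ∑ j ∈ range N, y i * E0 N 1 1 i j * y j) := by
      simp only [hterm, Finset.sum_add_distrib, Finset.mul_sum]
    rw [hsplit]
    have hQ0 := qf01_nonneg hN y
    have hQ1 := qf11_nonneg hN y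
    have hc : 0 ≤ c₁ - t := by linarith
    positivity
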